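/- Let β, β′ ∈ [0,1], λ ∈ ℂ and R ∈ SO(3). Then λ·(R·(1, iβ, 0)) = (1, iβ′, 0) holds if and only if β = β′ and one of the following is true: (a) β = 1 and there exist x, y ∈ ℝ with x² + y² = 1 such that λ = x + iy and R is the 3×3 matrix with rows (x, -y, 0), (y, x, 0), (0, 0, 1); (b) 0 < β < 1 and there exists ε ∈ {1, -1} such that λ = ε and R = diag(ε, ε, 1); (c) β = 0 and there exist ε ∈ {1, -1} and Q ∈ O(2) with det Q = ε such that λ = ε and R is the block-diagonal matrix with 1×1 block ε and lower-right 2×2 block Q. -/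
import Mathlib
open Matrix


set_option maxHeartbeats 800000 in
lemma stmt3_auxc (β β' : ℝ) (hβ'0 : 0 ≤ β') (l : ℂ) (R : Matrix (Fin 3) (Fin 3) ℝ)
    (hR : Rᵀ * R = 1) (hdet : R.det = 1)
    (hA : l.re * R 0 0 - l.im * (R 0 1 * β) = 1)
    (hC : l.re * (R 0 1 * β) + l.im * R 0 0 = 0)
    (hB : l.re * R 1 0 - l.im * (R 1 1 * β) = 0)
    (hD : l.re * (R 1 1 * β) + l.im * R 1 0 = β')
    (hr20 : R 2 0 = 0) (hb0 : β = 0) :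
    β' = 0 ∧ ∃ ε : ℝ, (ε = 1 ∨ ε = -1) ∧ ∃ Q : Matrix (Fin 2) (Fin 2) ℝ,
      Qᵀ * Q = 1 ∧ Q.det = ε ∧ l = (ε : ℂ) ∧
      R = !![ε, 0, 0; 0, Q 0 0, Q 0 1; 0, Q 1 0, Q 1 1] := by
  subst hb0
  simp only [mul_zero, zero_mul, sub_zero, zero_add, add_zero] at hA hC hB hD
  have hRRt : R * Rᵀ = 1 := mul_eq_one_comm.mp hR
  have c00 := congrFun (congrFun hR 0) 0
  have c11 := congrFun (congrFun hR 1) 1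
  have c12 := congrFun (congrFun hR 1) 2
  have c22 := congrFun (congrFun hR 2) 2
  have r00 := congrFun (congrFun hRRt 0) 0
  simp [Matrix.mul_apply, Fin.sum_univ_three] at c00 c11 c12 c22 r00
  rw [Matrix.det_fin_three] at hdet
  have hbz : l.im = 0 := by linear_combination l.re * hC - l.im * hA
  rw [hbz] at hC hD
  have hane : l.re ≠ 0 := by intro hz; rw [hz] at hA; norm_num at hA
  have hr10 : R 1 0 = 0 := (mul_eq_zero.mp hB).resolve_left hane
  have hβ'z : β' = 0 := by linear_combination -hD
  have hsq : R 0 0 * R 0 0 = 1 := by nlinarith [c00]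
  have haR : l.re = R 0 0 := by linear_combination R 0 0 * hA - l.re * hsq
  have hr01 : R 0 1 = 0 := by
    apply mul_self_eq_zero.mp
    nlinarith [mul_self_nonneg (R 0 1), mul_self_nonneg (R 0 2), r00, hsq]
  have hr02 : R 0 2 = 0 := by
    apply mul_self_eq_zero.mp
    nlinarith [mul_self_nonneg (R 0 1), mul_self_nonneg (R 0 2), r00, hsq]
  simp only [hr01, hr02, hr10, hr20, mul_zero, zero_mul, add_zero, zero_add,
    sub_zero] at c11 c12 c22 hdet
  refine ⟨hβ'z, R 0 0, mul_self_eq_one_iff.mp hsq,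
    !![R 1 1, R 1 2; R 2 1, R 2 2], ?_, ?_, ?_, ?_⟩
  · ext i j
    fin_cases i <;> fin_cases j <;>
      simp [Matrix.mul_apply, Fin.sum_univ_two, Matrix.transpose_apply, Matrix.vecHead] <;>
      linarith [c11, c12, c22]
  · rw [Matrix.det_fin_two_of]
    linear_combination R 0 0 * hdet - (R 1 1 * R 2 2 - R 1 2 * R 2 1) * hsq
  · apply Complex.ext <;> simp [hbz, haR]
  · conv_lhs => rw [Matrix.eta_fin_three R]
    rw [hr01, hr02, hr10, hr20]
    simp

set_option maxHeartbeats 800000 in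
lemma stmt3_auxa (β β' : ℝ) (hβ'0 : 0 ≤ β') (l : ℂ) (R : Matrix (Fin 3) (Fin 3) ℝ)
    (hR : Rᵀ * R = 1) (hdet : R.det = 1)
    (hA : l.re * R 0 0 - l.im * (R 0 1 * β) = 1)
    (hC : l.re * (R 0 1 * β) + l.im * R 0 0 = 0)
    (hB : l.re * R 1 0 - l.im * (R 1 1 * β) = 0)
    (hD : l.re * (R 1 1 * β) + l.im * R 1 0 = β')
    (hr20 : R 2 0 = 0) (hr21 : R 2 1 = 0) (hb1 : β = 1) :
    β' = 1 ∧ ∃ x y : ℝ, x ^ 2 + y ^ 2 = 1 ∧ l = (x : ℂ) + Complex.I * (y : ℂ) ∧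
      R = !![x, -y, 0; y, x, 0; 0, 0, 1] := by
  subst hb1
  simp only [mul_one] at hA hC hB hD
  have hRRt : R * Rᵀ = 1 := mul_eq_one_comm.mp hR
  have c00 := congrFun (congrFun hR 0) 0
  have c01 := congrFun (congrFun hR 0) 1
  have c11 := congrFun (congrFun hR 1) 1
  have r00 := congrFun (congrFun hRRt 0) 0
  have r11 := congrFun (congrFun hRRt 1) 1
  simp [Matrix.mul_apply, Fin.sum_univ_three] at c00 c01 c11 r00 r11
  rw [Matrix.det_fin_three] at hdet
  simp only [hr20, hr21, mul_zero, zero_mul, add_zero, zero_add, sub_zero] at c00 c01 c11 hdet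
  have k1 : l.re ^ 2 + l.im ^ 2 = 1 := by
    linear_combination (l.re * R 0 0 - l.im * R 0 1 + 1) * hA + (l.re * R 1 0 - l.im * R 1 1) * hB
      - l.re ^ 2 * c00 + 2 * l.re * l.im * c01 - l.im ^ 2 * c11
  have k2 : l.re ^ 2 + l.im ^ 2 = β' ^ 2 := by
    linear_combination (l.re * R 0 1 + l.im * R 0 0) * hC + (l.re * R 1 1 + l.im * R 1 0 + β') * hD
      - l.re ^ 2 * c11 - 2 * l.re * l.im * c01 - l.im ^ 2 * c00
  have hβ'1 : β' = 1 := by nlinarith [k1, k2]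
  subst hβ'1
  have e00 : R 0 0 = l.re := by linear_combination l.re * hA + l.im * hC - R 0 0 * k1
  have e10 : R 1 0 = l.im := by linear_combination l.re * hB + l.im * hD - R 1 0 * k1
  have e01 : R 0 1 = -l.im := by linear_combination (-l.im) * hA + l.re * hC - R 0 1 * k1
  have e11 : R 1 1 = l.re := by linear_combination (-l.im) * hB + l.re * hD - R 1 1 * k1
  rw [e00, e01] at r00
  rw [e10, e11] at r11
  have e02 : R 0 2 = 0 := by apply mul_self_eq_zero.mp; nlinarith [r00, k1]
  have e12 : R 1 2 = 0 := by apply mul_self_eq_zero.mp; nlinarith [r11, k1]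
  rw [e00, e01, e10, e11] at hdet
  have e22 : R 2 2 = 1 := by nlinarith [hdet, k1]
  refine ⟨rfl, l.re, l.im, k1, ?_, ?_⟩
  · apply Complex.ext <;> simp
  · conv_lhs => rw [Matrix.eta_fin_three R]
    rw [e00, e01, e02, e10, e11, e12, hr20, hr21, e22]

set_option maxHeartbeats 800000 in
lemma stmt3_auxb (β β' : ℝ) (hβ'0 : 0 ≤ β') (hβ'1 : β' ≤ 1) (l : ℂ)
    (R : Matrix (Fin 3) (Fin 3) ℝ)
    (hR : Rᵀ * R = 1) (hdet : R.det = 1)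
    (hA : l.re * R 0 0 - l.im * (R 0 1 * β) = 1)
    (hC : l.re * (R 0 1 * β) + l.im * R 0 0 = 0)
    (hB : l.re * R 1 0 - l.im * (R 1 1 * β) = 0)
    (hD : l.re * (R 1 1 * β) + l.im * R 1 0 = β')
    (hr20 : R 2 0 = 0) (hr21 : R 2 1 = 0) (hβp : 0 < β) (hβl : β < 1) :
    β = β' ∧ ∃ ε : ℝ, (ε = 1 ∨ ε = -1) ∧ l = (ε : ℂ) ∧ R = !![ε, 0, 0; 0, ε, 0; 0, 0, 1] := by
  have hRRt : R * Rᵀ = 1 := mul_eq_one_comm.mp hR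
  have c00 := congrFun (congrFun hR 0) 0
  have c01 := congrFun (congrFun hR 0) 1
  have c11 := congrFun (congrFun hR 1) 1
  have r00 := congrFun (congrFun hRRt 0) 0
  have r11 := congrFun (congrFun hRRt 1) 1
  simp [Matrix.mul_apply, Fin.sum_univ_three] at c00 c01 c11 r00 r11
  rw [Matrix.det_fin_three] at hdet
  simp only [hr20, hr21, mul_zero, zero_mul, add_zero, zero_add, sub_zero] at c00 c01 c11 hdet
  have k1 : l.re ^ 2 + l.im ^ 2 * β ^ 2 = 1 := by
    linear_combination (l.re * R 0 0 - l.im * (R 0 1 * β) + 1) * hA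
      + (l.re * R 1 0 - l.im * (R 1 1 * β)) * hB
      - l.re ^ 2 * c00 + 2 * l.re * l.im * β * c01 - l.im ^ 2 * β ^ 2 * c11
  have k2 : l.re ^ 2 * β ^ 2 + l.im ^ 2 = β' ^ 2 := by
    linear_combination (l.re * (R 0 1 * β) + l.im * R 0 0) * hC
      + (l.re * (R 1 1 * β) + l.im * R 1 0 + β') * hD
      - l.re ^ 2 * β ^ 2 * c11 - 2 * l.re * l.im * β * c01 - l.im ^ 2 * c00
  have k3 : l.re * l.im * (1 - β ^ 2) = 0 := by
    linear_combination (l.im * R 0 0 + l.re * (R 0 1 * β)) * hA + hC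
      + (l.re * (R 1 1 * β) + l.im * R 1 0) * hB
      - l.re * l.im * c00 - (l.re ^ 2 - l.im ^ 2) * β * c01 + l.re * l.im * β ^ 2 * c11
  have hbz : l.im = 0 := by
    rcases mul_eq_zero.mp k3 with hab | hne
    · rcases mul_eq_zero.mp hab with haz | hbz
      · exfalso
        rw [haz] at k1 k2
        have hb2 : l.im ^ 2 ≤ 1 := by nlinarith [k2]
        have h1 : (1 - l.im ^ 2) * β ^ 2 ≥ 0 := mul_nonneg (by linarith) (sq_nonneg β)
        nlinarith [k1, h1]
      · exact hbz
    · exfalso; nlinarith [hne]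
  rw [hbz] at k1 k2 hA hB hC hD
  simp only [zero_mul, mul_zero, sub_zero, add_zero, zero_add] at hA hB hC hD k1 k2
  have hsq : l.re ^ 2 = 1 := by linarith [k1]
  have hane : l.re ≠ 0 := by intro hz; rw [hz] at hsq; norm_num at hsq
  have hββ' : β = β' := by
    have h1 : (β - β') * (β + β') = 0 := by linear_combination k2 - β ^ 2 * hsq
    rcases mul_eq_zero.mp h1 with h | h
    · linarith
    · linarith
  subst hββ'
  have e00 : R 0 0 = l.re := by linear_combination l.re * hA - R 0 0 * hsq
  have e01 : R 0 1 = 0 :=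
    (mul_eq_zero.mp ((mul_eq_zero.mp hC).resolve_left hane)).resolve_right (ne_of_gt hβp)
  have e10 : R 1 0 = 0 := (mul_eq_zero.mp hB).resolve_left hane
  have e11 : R 1 1 = l.re := by
    have h2 : R 1 1 * β = l.re * β := by linear_combination l.re * hD - R 1 1 * β * hsq
    exact mul_right_cancel₀ (ne_of_gt hβp) h2
  rw [e00, e01] at r00
  rw [e10, e11] at r11
  have e02 : R 0 2 = 0 := by apply mul_self_eq_zero.mp; nlinarith [r00, hsq]
  have e12 : R 1 2 = 0 := by apply mul_self_eq_zero.mp; nlinarith [r11, hsq]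
  rw [e00, e01, e10, e11] at hdet
  have e22 : R 2 2 = 1 := by nlinarith [hdet, hsq]
  refine ⟨rfl, l.re, ?_, ?_, ?_⟩
  · have : l.re * l.re = 1 := by nlinarith [hsq]
    exact mul_self_eq_one_iff.mp this
  · apply Complex.ext <;> simp [hbz]
  · conv_lhs => rw [Matrix.eta_fin_three R]
    rw [e00, e01, e02, e10, e11, e12, hr20, hr21, e22]

set_option maxHeartbeats 1200000 in
/-- Characterization of when `λ·(R·(1, iβ, 0)) = (1, iβ′, 0)` for `R ∈ SO(3)`,
`β, β′ ∈ [0,1]` and `λ ∈ ℂ`. -/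
theorem stmt3 (β β' : ℝ) (hβ : β ∈ Set.Icc (0 : ℝ) 1) (hβ' : β' ∈ Set.Icc (0 : ℝ) 1)
    (l : ℂ) (R : Matrix (Fin 3) (Fin 3) ℝ) (hR : Rᵀ * R = 1) (hdet : R.det = 1) :
    l • ((R.map Complex.ofReal) *ᵥ ![1, Complex.I * (β : ℂ), 0]) =
        ![1, Complex.I * (β' : ℂ), 0] ↔
      β = β' ∧
      ((β = 1 ∧ ∃ x y : ℝ, x ^ 2 + y ^ 2 = 1 ∧ l = (x : ℂ) + Complex.I * (y : ℂ) ∧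
          R = !![x, -y, 0; y, x, 0; 0, 0, 1]) ∨
       (0 < β ∧ β < 1 ∧ ∃ ε : ℝ, (ε = 1 ∨ ε = -1) ∧ l = (ε : ℂ) ∧
          R = !![ε, 0, 0; 0, ε, 0; 0, 0, 1]) ∨
       (β = 0 ∧ ∃ ε : ℝ, (ε = 1 ∨ ε = -1) ∧ ∃ Q : Matrix (Fin 2) (Fin 2) ℝ,
          Qᵀ * Q = 1 ∧ Q.det = ε ∧ l = (ε : ℂ) ∧
          R = !![ε, 0, 0; 0, Q 0 0, Q 0 1; 0, Q 1 0, Q 1 1])) := by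
  obtain ⟨hβ0, hβ1⟩ := hβ
  obtain ⟨hβ'0, hβ'1⟩ := hβ'
  constructor
  · intro h
    have h0 := congrFun h 0
    have h1 := congrFun h 1
    have h2 := congrFun h 2
    simp [Matrix.mulVec, dotProduct, Fin.sum_univ_three, Complex.ext_iff,
      Complex.mul_re, Complex.mul_im] at h0 h1 h2
    obtain ⟨hA, hC⟩ := h0
    obtain ⟨hB, hD⟩ := h1
    have hlne : ¬ (l.re = 0 ∧ l.im = 0) := by
      rintro ⟨ha1, ha2⟩; rw [ha1, ha2] at hA; norm_num at hA
    obtain ⟨hr20, hor⟩ := h2.resolve_left hlne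
    by_cases hb0 : β = 0
    · obtain ⟨hβ'z, hrest⟩ := stmt3_auxc β β' hβ'0 l R hR hdet hA hC hB hD hr20 hb0
      exact ⟨by rw [hb0, hβ'z], Or.inr (Or.inr ⟨hb0, hrest⟩)⟩
    · have hr21 : R 2 1 = 0 := hor.resolve_right hb0
      by_cases hb1 : β = 1
      · obtain ⟨hβ'1', hrest⟩ := stmt3_auxa β β' hβ'0 l R hR hdet hA hC hB hD hr20 hr21 hb1
        exact ⟨by rw [hb1, hβ'1'], Or.inl ⟨hb1, hrest⟩⟩
      · have hβp : 0 < β := lt_of_le_of_ne hβ0 (Ne.symm hb0)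
        have hβl : β < 1 := lt_of_le_of_ne hβ1 hb1
        obtain ⟨hββ', hrest⟩ :=
          stmt3_auxb β β' hβ'0 hβ'1 l R hR hdet hA hC hB hD hr20 hr21 hβp hβl
        exact ⟨hββ', Or.inr (Or.inl ⟨hβp, hβl, hrest⟩)⟩
  · rintro ⟨hββ', hcase⟩
    subst hββ'
    rcases hcase with ⟨hb1, x, y, hxy, hl, hRe⟩ | ⟨hβp, hβl, ε, hε, hl, hRe⟩ |
      ⟨hb0, ε, hε, Q, hQ, hQd, hl, hRe⟩
    · subst hl hRe hb1
      funext i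
      fin_cases i <;>
        simp [Matrix.mulVec, dotProduct, Fin.sum_univ_three, Complex.ext_iff,
          Complex.mul_re, Complex.mul_im] <;>
        constructor <;> nlinarith [hxy]
    · subst hl hRe
      rcases hε with h | h <;> subst h <;> funext i <;> fin_cases i <;>
        simp [Matrix.mulVec, dotProduct, Fin.sum_univ_three, Complex.ext_iff,
          Complex.mul_re, Complex.mul_im]
    · subst hl hRe hb0
      rcases hε with h | h <;> subst h <;> funext i <;> fin_cases i <;>
        simp [Matrix.mulVec, dotProduct, Fin.sum_univ_three, Complex.ext_iff,
          Complex.mul_re, Complex.mul_im]
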